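/- Suppose τ : V → ℝ satisfies the Hirota bilinear difference equation with shifts α, β, κ: a(β,κ)τ(x+α)τ(x+β+κ) − a(α,κ)τ(x+β)τ(x+α+κ) + a(α,β)τ(x+κ)τ(x+α+β) = 0 for all x ∈ V. Let u_κ : V → ℝ be nowhere zero with u_κ(x+ξ) = a(κ,ξ)·u_κ(x) for ξ ∈ {α,β}, where a(κ,ξ) = −a(ξ,κ) ≠ 0. Define σ^(3)(x) := u_κ(x)⁻¹·τ(x−κ) and ρ^(3)(x) := u_κ(x)·τ(x+κ). Then σ^(3) satisfies a(α,β)·τ(x)·σ^(3)(x+α+β) = σ^(3)(x+α)τ(x+β) − τ(x+α)σ^(3)(x+β), and ρ^(3) satisfies a(α,β)·ρ^(3)(x)·τ(x+α+β) = τ(x+α)ρ^(3)(x+β) − ρ^(3)(x+α)τ(x+β), for all x ∈ V. -/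
import Mathlib


theorem miura_from_HBDE
    {V : Type*} [AddCommGroup V]
    (τ : V → ℝ) (α β κ : V)
    (a : V → V → ℝ)
    (haskew : ∀ ξ η, a ξ η = - a η ξ)
    (ha0 : a α κ ≠ 0) (ha0' : a β κ ≠ 0)
    (hHBDE : ∀ x : V,
      a β κ * τ (x + α) * τ (x + β + κ)
      - a α κ * τ (x + β) * τ (x + α + κ)
      + a α β * τ (x + κ) * τ (x + α + β) = 0)
    (u : V → ℝ) (hu0 : ∀ x, u x ≠ 0)
    (hu : ∀ ξ ∈ ({α, β} : Set V), ∀ x : V, u (x + ξ) = a κ ξ * u x)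
    (σ3 ρ3 : V → ℝ)
    (hσ3 : ∀ x, σ3 x = (u x)⁻¹ * τ (x - κ))
    (hρ3 : ∀ x, ρ3 x = u x * τ (x + κ)) :
    (∀ x : V,
      a α β * τ x * σ3 (x + α + β) =
        σ3 (x + α) * τ (x + β) - τ (x + α) * σ3 (x + β)) ∧
    (∀ x : V,
      a α β * ρ3 x * τ (x + α + β) =
        τ (x + α) * ρ3 (x + β) - ρ3 (x + α) * τ (x + β)) := by
  have huα := hu α (by simp)
  have huβ := hu β (by simp)
  have hκα : a κ α = - a α κ := haskew κ α
  have hκβ : a κ β = - a β κ := haskew κ β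
  constructor
  · intro x
    have h := hHBDE (x - κ)
    rw [show x - κ + β + κ = x + β from by abel,
        show x - κ + α + κ = x + α from by abel,
        show x - κ + κ = x from by abel,
        show x - κ + α + β = x + α + β - κ from by abel,
        show x - κ + α = x + α - κ from by abel,
        show x - κ + β = x + β - κ from by abel] at h
    have hu3 : u (x + α + β) = a κ β * (a κ α * u x) := by
      rw [huβ (x + α), huα x]
    have hx := hu0 x
    have s1 : a κ α * u x * σ3 (x + α) = τ (x + α - κ) := by
      rw [hσ3, ← huα x]
      exact mul_inv_cancel_left₀ (hu0 _) _
    have s2 : a κ β * u x * σ3 (x + β) = τ (x + β - κ) := by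
      rw [hσ3, ← huβ x]
      exact mul_inv_cancel_left₀ (hu0 _) _
    have s3 : a κ β * (a κ α * u x) * σ3 (x + α + β) = τ (x + α + β - κ) := by
      rw [hσ3, ← hu3]
      exact mul_inv_cancel_left₀ (hu0 _) _
    have hκα0 : a κ α ≠ 0 := by rw [hκα]; exact neg_ne_zero.mpr ha0
    have hκβ0 : a κ β ≠ 0 := by rw [hκβ]; exact neg_ne_zero.mpr ha0'
    apply mul_left_cancel₀ (mul_ne_zero hκβ0 (mul_ne_zero hκα0 hx))
    linear_combination (a α β * τ x) * s3 - (a κ β * τ (x + β)) * s1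
      + (a κ α * τ (x + α)) * s2 + h
      - (τ (x + β) * τ (x + α - κ)) * hκβ + (τ (x + α) * τ (x + β - κ)) * hκα
  · intro x
    have h := hHBDE x
    rw [hρ3, hρ3, hρ3, huα x, huβ x, hκα, hκβ,
        show x + β + κ = x + β + κ from rfl]
    linear_combination u x * h
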